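/- For all τ ∈ ℍ and all z = (z₁,…,z₁₂) ∈ ℂ^{12} one has the doubling identity φ11(2τ, 2z) = φ10(τ,z)·φ11(τ,z), where 2z := (2z₁,…,2z₁₂) and 2τ ∈ ℍ. -/

import Mathlib

open Complex

/-- `ee w = exp(2πiw)`; thus `q^r = ee (r·τ)` and `ζ^r = ee (r·u)`. -/
noncomputable def ee (w : ℂ) : ℂ := Complex.exp (2 * Real.pi * Complex.I * w)

/-- The Dedekind eta function `η(τ) = q^{1/24} ∏_{n≥1} (1 − qⁿ)`. -/
noncomputable def dedekindEta (τ : UpperHalfPlane) : ℂ :=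
  ee ((τ : ℂ) / 24) * ∏' n : ℕ, (1 - ee (((n : ℂ) + 1) * (τ : ℂ)))

/-- `ϑ11(τ,u) = −q^{1/8} ζ^{−1/2} ∏_{n≥1} (1−q^{n−1}ζ)(1−qⁿζ^{−1})(1−qⁿ)`. -/
noncomputable def th11 (τ : UpperHalfPlane) (u : ℂ) : ℂ :=
  -(ee ((τ : ℂ) / 8) * ee (-u / 2)) *
    ∏' n : ℕ, ((1 - ee ((n : ℂ) * (τ : ℂ)) * ee u) *
      (1 - ee (((n : ℂ) + 1) * (τ : ℂ)) * ee (-u)) * (1 - ee (((n : ℂ) + 1) * (τ : ℂ))))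

/-- `ϑ10(τ,u) = q^{1/8}(ζ^{1/2}+ζ^{−1/2}) ∏_{n≥1} (1−qⁿ)(1+qⁿζ)(1+qⁿζ^{−1})`. -/
noncomputable def th10 (τ : UpperHalfPlane) (u : ℂ) : ℂ :=
  ee ((τ : ℂ) / 8) * (ee (u / 2) + ee (-u / 2)) *
    ∏' n : ℕ, ((1 - ee (((n : ℂ) + 1) * (τ : ℂ))) *
      (1 + ee (((n : ℂ) + 1) * (τ : ℂ)) * ee u) * (1 + ee (((n : ℂ) + 1) * (τ : ℂ)) * ee (-u)))

/-- `φ10(τ,z) = η(τ)^{−12} ∏_{j=1}^{12} ϑ10(τ,z_j)`. -/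
noncomputable def phi10 (τ : UpperHalfPlane) (z : Fin 12 → ℂ) : ℂ :=
  (dedekindEta τ ^ 12)⁻¹ * ∏ j, th10 τ (z j)

/-- `φ11(τ,z) = η(τ)^{−12} ∏_{j=1}^{12} ϑ11(τ,z_j)`. -/
noncomputable def phi11 (τ : UpperHalfPlane) (z : Fin 12 → ℂ) : ℂ :=
  (dedekindEta τ ^ 12)⁻¹ * ∏ j, th11 τ (z j)

/-- `2τ` as a point of the upper half-plane. -/
noncomputable def dblH (τ : UpperHalfPlane) : UpperHalfPlane :=
  ⟨2 * (τ : ℂ), by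
    have h := τ.im_pos
    rw [Complex.mul_im]
    simp [UpperHalfPlane.coe_im]
    linarith⟩

section Aux

open Filter

lemma ee_add (x y : ℂ) : ee (x + y) = ee x * ee y := by
  rw [ee, ee, ee, mul_add, Complex.exp_add]

lemma ee_ne_zero (x : ℂ) : ee x ≠ 0 := Complex.exp_ne_zero _

lemma ee_zero : ee 0 = 1 := by simp [ee]

lemma ee_nat_mul (n : ℕ) (w : ℂ) : ee ((n : ℂ) * w) = ee w ^ n := by
  rw [ee, ee, ← Complex.exp_nat_mul]
  congr 1
  ring

lemma ee_succ_mul (n : ℕ) (w : ℂ) : ee (((n : ℂ) + 1) * w) = ee w ^ (n + 1) := by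
  have h := ee_nat_mul (n + 1) w
  push_cast at h
  exact h

lemma ee_two_mul (w : ℂ) : ee (2 * w) = ee w ^ 2 := by
  have h := ee_nat_mul 2 w
  push_cast at h
  exact h

lemma norm_ee_lt_one (τ : UpperHalfPlane) : ‖ee (τ : ℂ)‖ < 1 := by
  have him : 0 < (τ : ℂ).im := τ.im_pos
  have hπ := Real.pi_pos
  rw [ee, Complex.norm_exp, Real.exp_lt_one_iff]
  have h : (2 * (Real.pi : ℂ) * Complex.I * (τ : ℂ)).re = -(2 * Real.pi * (τ : ℂ).im) := by
    simp [Complex.mul_re, Complex.mul_im]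
  rw [h]
  nlinarith

lemma multipliable_of_eq_zero {f : ℕ → ℂ} {m : ℕ} (h : f m = 0) : Multipliable f := by
  refine ⟨0, ?_⟩
  rw [HasProd]
  have he : (fun _ : Finset ℕ => (0 : ℂ)) =ᶠ[atTop] fun s => ∏ b ∈ s, f b := by
    filter_upwards [Filter.eventually_ge_atTop ({m} : Finset ℕ)] with s hs
    exact (Finset.prod_eq_zero (Finset.singleton_subset_iff.mp hs) h).symm
  exact tendsto_const_nhds.congr' he

lemma summable_log_one_add {f : ℕ → ℂ} (hf : Summable fun n => ‖f n‖) :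
    Summable fun n => Complex.log (1 + f n) := by
  have h0 : Tendsto (fun n => ‖f n‖) atTop (nhds 0) := hf.tendsto_atTop_zero
  refine Summable.of_norm_bounded_eventually_nat (hf.mul_left (3 / 2)) ?_
  have hev : ∀ᶠ n in atTop, ‖f n‖ ≤ 1 / 2 := by
    have : ∀ᶠ x in atTop, ‖f x‖ < 1 / 2 :=
      h0.eventually (eventually_lt_nhds (by norm_num : (0:ℝ) < 1/2))
    filter_upwards [this] with n hn using hn.le
  filter_upwards [hev] with n hn
  exact Complex.norm_log_one_add_half_le_self hn

lemma multipliable_one_add {f : ℕ → ℂ} (hf : Summable fun n => ‖f n‖) :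
    Multipliable fun n => 1 + f n := by
  by_cases h : ∀ n, 1 + f n ≠ 0
  · exact Complex.multipliable_of_summable_log (summable_log_one_add hf)
  · push_neg at h
    obtain ⟨m, hm⟩ := h
    exact multipliable_of_eq_zero hm

lemma tprod_one_add_ne_zero {f : ℕ → ℂ} (hf : Summable fun n => ‖f n‖)
    (h : ∀ n, 1 + f n ≠ 0) : (∏' n : ℕ, (1 + f n)) ≠ 0 := by
  have he := Complex.cexp_tsum_eq_tprod (f := fun n => 1 + f n) (fun n => h n) (summable_log_one_add hf)
  rw [← he]
  exact Complex.exp_ne_zero _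

section Geom

variable {q : ℂ} (hq : ‖q‖ < 1)
include hq

lemma summable_geo (c : ℂ) : Summable fun n : ℕ => ‖c * q ^ n‖ := by
  have := (summable_geometric_of_lt_one (norm_nonneg q) hq).mul_left ‖c‖
  exact this.congr fun n => by rw [norm_mul, norm_pow]

lemma summable_geo' (c : ℂ) : Summable fun n : ℕ => ‖c * q ^ (n + 1)‖ := by
  refine (summable_geo hq (c * q)).congr fun n => ?_
  rw [pow_succ']
  ring_nf

lemma mult0 (c : ℂ) : Multipliable fun n : ℕ => 1 + c * q ^ n :=
  multipliable_one_add (summable_geo hq c)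

lemma mult1 (c : ℂ) : Multipliable fun n : ℕ => 1 + c * q ^ (n + 1) :=
  multipliable_one_add (summable_geo' hq c)

lemma shift (c : ℂ) :
    (∏' n : ℕ, (1 + c * q ^ n)) = (1 + c) * ∏' n : ℕ, (1 + c * q ^ (n + 1)) := by
  have h := tprod_eq_zero_mul' (f := fun n : ℕ => 1 + c * q ^ n) (mult1 hq c)
  simpa using h

lemma pair (c : ℂ) :
    (∏' n : ℕ, (1 + c * q ^ (n + 1))) * (∏' n : ℕ, (1 + -c * q ^ (n + 1))) =
      ∏' n : ℕ, (1 + -(c ^ 2) * (q ^ 2) ^ (n + 1)) := by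
  rw [← Multipliable.tprod_mul (mult1 hq c) (mult1 hq (-c))]
  refine tprod_congr fun n => ?_
  have h : (q ^ 2) ^ (n + 1) = q ^ (n + 1) * q ^ (n + 1) := by
    rw [← pow_mul, two_mul, pow_add]
  rw [h]; ring

end Geom

lemma split3 {f g h : ℕ → ℂ} (hf : Multipliable f) (hg : Multipliable g) (hh : Multipliable h) :
    ∏' n : ℕ, (f n * g n * h n) = (∏' n, f n) * (∏' n, g n) * (∏' n, h n) := by
  rw [Multipliable.tprod_mul (hf.mul hg) hh, Multipliable.tprod_mul hf hg]

lemma eta_eq (τ : UpperHalfPlane) :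
    dedekindEta τ = ee ((τ : ℂ) / 24) * ∏' n : ℕ, (1 + (-1 : ℂ) * ee (τ : ℂ) ^ (n + 1)) := by
  unfold dedekindEta
  congr 1
  exact tprod_congr fun n => by rw [ee_succ_mul]; ring

lemma th11_eq (τ : UpperHalfPlane) (u : ℂ) :
    th11 τ u = -(ee ((τ : ℂ) / 8) * ee (-u / 2)) *
      ((1 + -ee u) * (∏' n : ℕ, (1 + -ee u * ee (τ : ℂ) ^ (n + 1))) *
        (∏' n : ℕ, (1 + -ee (-u) * ee (τ : ℂ) ^ (n + 1))) *
        (∏' n : ℕ, (1 + (-1 : ℂ) * ee (τ : ℂ) ^ (n + 1)))) := by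
  have hQ := norm_ee_lt_one τ
  unfold th11
  congr 1
  have h1 : (∏' n : ℕ, ((1 - ee ((n : ℂ) * (τ : ℂ)) * ee u) *
      (1 - ee (((n : ℂ) + 1) * (τ : ℂ)) * ee (-u)) * (1 - ee (((n : ℂ) + 1) * (τ : ℂ))))) =
      ∏' n : ℕ, ((1 + -ee u * ee (τ : ℂ) ^ n) * (1 + -ee (-u) * ee (τ : ℂ) ^ (n + 1)) *
        (1 + (-1 : ℂ) * ee (τ : ℂ) ^ (n + 1))) :=
    tprod_congr fun n => by rw [ee_nat_mul, ee_succ_mul]; ring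
  rw [h1, split3 (mult0 hQ _) (mult1 hQ _) (mult1 hQ _), shift hQ]

lemma th10_eq (τ : UpperHalfPlane) (u : ℂ) :
    th10 τ u = ee ((τ : ℂ) / 8) * (ee (u / 2) + ee (-u / 2)) *
      ((∏' n : ℕ, (1 + (-1 : ℂ) * ee (τ : ℂ) ^ (n + 1))) *
        (∏' n : ℕ, (1 + ee u * ee (τ : ℂ) ^ (n + 1))) *
        (∏' n : ℕ, (1 + ee (-u) * ee (τ : ℂ) ^ (n + 1)))) := by
  have hQ := norm_ee_lt_one τ
  unfold th10
  congr 1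
  have h1 : (∏' n : ℕ, ((1 - ee (((n : ℂ) + 1) * (τ : ℂ))) *
      (1 + ee (((n : ℂ) + 1) * (τ : ℂ)) * ee u) * (1 + ee (((n : ℂ) + 1) * (τ : ℂ)) * ee (-u)))) =
      ∏' n : ℕ, ((1 + (-1 : ℂ) * ee (τ : ℂ) ^ (n + 1)) * (1 + ee u * ee (τ : ℂ) ^ (n + 1)) *
        (1 + ee (-u) * ee (τ : ℂ) ^ (n + 1))) :=
    tprod_congr fun n => by rw [ee_succ_mul]; ring
  rw [h1, split3 (mult1 hQ _) (mult1 hQ _) (mult1 hQ _)]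

lemma eta_ne_zero (τ : UpperHalfPlane) : dedekindEta τ ≠ 0 := by
  have hQ := norm_ee_lt_one τ
  rw [eta_eq]
  refine mul_ne_zero (ee_ne_zero _) (tprod_one_add_ne_zero (summable_geo' hQ _) fun n => ?_)
  intro h
  have h1 : ee (τ : ℂ) ^ (n + 1) = 1 := by linear_combination -h
  have h2 : ‖ee (τ : ℂ) ^ (n + 1)‖ < 1 := by
    rw [norm_pow]
    exact pow_lt_one₀ (norm_nonneg _) hQ (Nat.succ_ne_zero n)
  rw [h1, norm_one] at h2
  exact lt_irrefl _ h2

lemma key (τ : UpperHalfPlane) (u : ℂ) :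
    dedekindEta τ ^ 2 * th11 (dblH τ) (2 * u) =
      dedekindEta (dblH τ) * (th10 τ u * th11 τ u) := by
  have hQ := norm_ee_lt_one τ
  have hd : (dblH τ : ℂ) = 2 * (τ : ℂ) := rfl
  have hQ2 : ee (2 * (τ : ℂ)) = ee (τ : ℂ) ^ 2 := ee_two_mul _
  have ha2 : ee (2 * u) = ee u ^ 2 := ee_two_mul _
  have hb2 : ee (-(2 * u)) = ee (-u) ^ 2 := by
    rw [show -(2 * u) = 2 * (-u) by ring, ee_two_mul]
  have hu2 : ee (-(2 * u) / 2) = ee (-u) := by rw [show -(2 * u) / 2 = -u by ring]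
  have h8 : ee (2 * (τ : ℂ) / 8) = ee ((τ : ℂ) / 8) ^ 2 := by
    rw [show 2 * (τ : ℂ) / 8 = (τ : ℂ) / 8 + (τ : ℂ) / 8 by ring, ee_add, sq]
  have h24 : ee (2 * (τ : ℂ) / 24) = ee ((τ : ℂ) / 24) ^ 2 := by
    rw [show 2 * (τ : ℂ) / 24 = (τ : ℂ) / 24 + (τ : ℂ) / 24 by ring, ee_add, sq]
  have hab : ee u * ee (-u) = 1 := by
    rw [← ee_add, add_neg_cancel, ee_zero]
  have hcd : ee (u / 2) * ee (-u / 2) = 1 := by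
    rw [← ee_add, show u / 2 + -u / 2 = 0 by ring, ee_zero]
  have hdd : ee (-u / 2) * ee (-u / 2) = ee (-u) := by
    rw [← ee_add, show -u / 2 + -u / 2 = -u by ring]
  rw [eta_eq τ, eta_eq (dblH τ), th11_eq (dblH τ) (2 * u), th11_eq τ u, th10_eq τ u]
  simp only [hd, hQ2, ha2, hb2, hu2, h8, h24]
  rw [← pair hQ (ee u), ← pair hQ (ee (-u))]
  linear_combination
    (-(ee ((τ : ℂ) / 24) ^ 2 * ee ((τ : ℂ) / 8) ^ 2 *
        (∏' n : ℕ, (1 + -1 * ee (τ : ℂ) ^ (n + 1))) ^ 2 *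
        (∏' n : ℕ, (1 + -1 * (ee (τ : ℂ) ^ 2) ^ (n + 1))) *
        (∏' n : ℕ, (1 + ee u * ee (τ : ℂ) ^ (n + 1))) *
        (∏' n : ℕ, (1 + -ee u * ee (τ : ℂ) ^ (n + 1))) *
        (∏' n : ℕ, (1 + ee (-u) * ee (τ : ℂ) ^ (n + 1))) *
        (∏' n : ℕ, (1 + -ee (-u) * ee (τ : ℂ) ^ (n + 1))))) *
      ((1 - ee u) * hab + (ee u - 1) * hcd + (ee u - 1) * hdd)


end Aux

/-- The doubling identity `φ11(2τ, 2z) = φ10(τ,z) · φ11(τ,z)`. -/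
theorem phi11_doubling (τ : UpperHalfPlane) (z : Fin 12 → ℂ) :
    phi11 (dblH τ) (fun j => 2 * z j) = phi10 τ z * phi11 τ z := by
  have hη := eta_ne_zero τ
  have hηd := eta_ne_zero (dblH τ)
  have hkey : ∀ u : ℂ, th11 (dblH τ) (2 * u) =
      (dedekindEta τ ^ 2)⁻¹ * (dedekindEta (dblH τ) * (th10 τ u * th11 τ u)) := by
    intro u
    rw [← key τ u, ← mul_assoc, inv_mul_cancel₀ (pow_ne_zero 2 hη), one_mul]
  unfold phi11 phi10
  simp only [hkey]
  rw [Finset.prod_mul_distrib, Finset.prod_mul_distrib, Finset.prod_const,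
    Finset.card_univ, Fintype.card_fin]
  field_simp
  rw [Finset.prod_mul_distrib]
  rw [Finset.prod_const, Finset.card_univ, Fintype.card_fin]
  ring
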